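/- Let F be a Magidor filter over a cardinal λ, let θ < λ be an infinite cardinal, and let g : λ → λ be monotonically increasing, unbounded in λ, and almost one-to-one with respect to θ. Then G := {x ⊆ λ : g⁻¹[x] ∈ F} is a Magidor filter over λ. -/

import Mathlib

open Cardinal Set

/-- `u` is a member of `[λ]^{ℵ₀-bd}`: a countably infinite subset of `λ`
(identified with the set of ordinals below `λ.ord`) which is bounded, i.e. `sup u < λ`. -/
def BddCtbl (lam : Cardinal.{0}) (u : Set Ordinal.{0}) : Prop :=
  u ⊆ Set.Iio lam.ord ∧ u.Countable ∧ u.Infinite ∧ sSup u < lam.ord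

/-- `λ` is a Magidor cardinal: `λ → [λ]^{ℵ₀-bd}_λ`, i.e. for every coloring
`f : [λ]^{ℵ₀-bd} → λ` there is `A ⊆ λ` of full cardinality `λ` such that `f`
omits some color `γ < λ` on the countable bounded subsets of `A`. -/
def IsMagidorCard (lam : Cardinal.{0}) : Prop :=
  ∀ f : Set Ordinal.{0} → Ordinal.{0},
    (∀ u, BddCtbl lam u → f u < lam.ord) →
    ∃ A : Set Ordinal.{0}, A ⊆ Set.Iio lam.ord ∧ #A = Cardinal.lift.{1} lam ∧
      ∃ γ < lam.ord, ∀ u ⊆ A, BddCtbl lam u → f u ≠ γ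

/-- `F` is a filter over `λ`: a nonempty collection of subsets of `λ` closed under
supersets (within `λ`) and finite (binary) intersections, with `∅ ∉ F`. -/
def IsFilterOn (lam : Cardinal.{0}) (F : Set (Set Ordinal.{0})) : Prop :=
  F.Nonempty ∧ (∀ x ∈ F, x ⊆ Set.Iio lam.ord) ∧
    (∀ x ∈ F, ∀ y, x ⊆ y → y ⊆ Set.Iio lam.ord → y ∈ F) ∧
    (∀ x ∈ F, ∀ y ∈ F, x ∩ y ∈ F) ∧ ∅ ∉ F

/-- `F` is a Magidor filter over `λ`: a uniform filter over `λ` containing all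
end-segments of `λ`, such that every coloring `c : [λ]^{ℵ₀-bd} → λ` omits some
color `γ < λ` on the countable bounded subsets of some member of `F`. -/
def IsMagidorFilter (lam : Cardinal.{0}) (F : Set (Set Ordinal.{0})) : Prop :=
  IsFilterOn lam F ∧
  (∀ x ∈ F, #x = Cardinal.lift.{1} lam) ∧
  (∀ α < lam.ord, {β | α ≤ β ∧ β < lam.ord} ∈ F) ∧
  (∀ c : Set Ordinal.{0} → Ordinal.{0}, (∀ u, BddCtbl lam u → c u < lam.ord) →
    ∃ x ∈ F, ∃ γ < lam.ord, ∀ u ⊆ x, BddCtbl lam u → c u ≠ γ)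

/-- `g : λ → λ` is monotonically increasing (below `λ`). -/
def MonoIncOn (lam : Cardinal.{0}) (g : Ordinal.{0} → Ordinal.{0}) : Prop :=
  ∀ α β : Ordinal.{0}, α ≤ β → β < lam.ord → g α ≤ g β

/-- the range of `g` on `λ` is unbounded in `λ`. -/
def UnbddIn (lam : Cardinal.{0}) (g : Ordinal.{0} → Ordinal.{0}) : Prop :=
  ∀ β < lam.ord, ∃ α < lam.ord, β ≤ g α

/-- `g` is almost one-to-one with respect to `θ`: every fiber `g⁻¹({γ})` (for `γ < λ`)
has cardinality `< θ`. -/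
def AlmostInj (lam θ : Cardinal.{0}) (g : Ordinal.{0} → Ordinal.{0}) : Prop :=
  ∀ γ < lam.ord, #{α : Ordinal.{0} // α < lam.ord ∧ g α = γ} < Cardinal.lift.{1} θ

/-- `g` is a function from `λ` to `λ` which is monotonically increasing, unbounded
in `λ`, and almost one-to-one with respect to `θ`. -/
def GoodFn (lam θ : Cardinal.{0}) (g : Ordinal.{0} → Ordinal.{0}) : Prop :=
  (∀ α < lam.ord, g α < lam.ord) ∧ MonoIncOn lam g ∧ UnbddIn lam g ∧ AlmostInj lam θ g

/-- `f <_F g` : the set of `α < λ` with `f α < g α` belongs to `F`. -/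
def ltF (lam : Cardinal.{0}) (F : Set (Set Ordinal.{0}))
    (f g : Ordinal.{0} → Ordinal.{0}) : Prop :=
  {α | α < lam.ord ∧ f α < g α} ∈ F

/-- if `F` is a Magidor filter over `λ`, `θ < λ` is infinite, and
`g : λ → λ` is monotonically increasing, unbounded and almost one-to-one w.r.t. `θ`,
then the projection `G = {x ⊆ λ : g⁻¹[x] ∈ F}` is a Magidor filter over `λ`. -/
theorem projection_is_magidor_filter (lam θ : Cardinal.{0})
    (hθ : Cardinal.aleph0 ≤ θ) (hθlam : θ < lam)
    (F : Set (Set Ordinal.{0})) (hF : IsMagidorFilter lam F)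
    (g : Ordinal.{0} → Ordinal.{0})
    (hmaps : ∀ α < lam.ord, g α < lam.ord)
    (hmono : MonoIncOn lam g) (hunb : UnbddIn lam g) (hainj : AlmostInj lam θ g) :
    IsMagidorFilter lam
      {x : Set Ordinal.{0} | x ⊆ Set.Iio lam.ord ∧
        {α | α < lam.ord ∧ g α ∈ x} ∈ F} := by
  obtain ⟨⟨hne, hsub, hsupF, hint, hemp⟩, hunif, hend, hcolor⟩ := hF
  have hlam0 : Cardinal.aleph0 ≤ lam := hθ.trans hθlam.le
  have hordlim : Order.IsSuccLimit lam.ord := Cardinal.isSuccLimit_ord hlam0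
  have hord0 : (0 : Ordinal) < lam.ord := hordlim.pos
  have hIioF : Set.Iio lam.ord ∈ F := by
    obtain ⟨x, hx⟩ := hne
    exact hsupF x hx _ (hsub x hx) subset_rfl
  have hIioG : Set.Iio lam.ord ∈
      {x : Set Ordinal.{0} | x ⊆ Set.Iio lam.ord ∧ {α | α < lam.ord ∧ g α ∈ x} ∈ F} := by
    refine ⟨subset_rfl, ?_⟩
    exact hsupF _ hIioF _ (fun α hα => ⟨hα, hmaps α hα⟩) (fun α hα => hα.1)
  have hmkIio : #(Set.Iio lam.ord) = Cardinal.lift.{1} lam := by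
    rw [Ordinal.mk_Iio_ordinal, Cardinal.card_ord]
  refine ⟨⟨⟨_, hIioG⟩, fun x hx => hx.1, ?_, ?_, ?_⟩, ?_, ?_, ?_⟩
  · -- superset closure
    rintro x ⟨hx1, hx2⟩ y hxy hy
    exact ⟨hy, hsupF _ hx2 _ (fun α hα => ⟨hα.1, hxy hα.2⟩) (fun α hα => hα.1)⟩
  · -- intersections
    rintro x ⟨hx1, hx2⟩ y ⟨hy1, hy2⟩
    refine ⟨fun α hα => hx1 hα.1, ?_⟩
    have heq : {α | α < lam.ord ∧ g α ∈ x ∩ y} =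
        {α | α < lam.ord ∧ g α ∈ x} ∩ {α | α < lam.ord ∧ g α ∈ y} := by
      ext α; simp only [Set.mem_setOf_eq, Set.mem_inter_iff]; tauto
    rw [heq]
    exact hint _ hx2 _ hy2
  · -- empty set not in G
    rintro ⟨h1, h2⟩
    have heq : {α | α < lam.ord ∧ g α ∈ (∅ : Set Ordinal.{0})} = ∅ := by
      ext α; simp
    rw [heq] at h2
    exact hemp h2
  · -- uniformity
    rintro x ⟨hx1, hx2⟩
    have hle : #x ≤ Cardinal.lift.{1} lam := hmkIio ▸ Cardinal.mk_le_mk_of_subset hx1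
    rcases hle.lt_or_eq with hlt | heq
    · exfalso
      have hP : #{α | α < lam.ord ∧ g α ∈ x} = Cardinal.lift.{1} lam := hunif _ hx2
      have hsubU : {α | α < lam.ord ∧ g α ∈ x} ⊆
          ⋃ γ ∈ x, {α | α < lam.ord ∧ g α = γ} := fun α hα =>
        Set.mem_biUnion hα.2 ⟨hα.1, rfl⟩
      have h1 : #{α | α < lam.ord ∧ g α ∈ x} ≤
          #x * ⨆ γ : x, #{α | α < lam.ord ∧ g α = γ.1} :=
        (Cardinal.mk_le_mk_of_subset hsubU).trans (Cardinal.mk_biUnion_le _ _)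
      have h2 : (⨆ γ : x, #{α | α < lam.ord ∧ g α = γ.1}) ≤ Cardinal.lift.{1} θ := by
        refine ciSup_le' fun γ => ?_
        exact (hainj γ.1 (hx1 γ.2)).le
      have h3 : #{α | α < lam.ord ∧ g α ∈ x} ≤ #x * Cardinal.lift.{1} θ :=
        h1.trans (by gcongr)
      have h4 : #x * Cardinal.lift.{1} θ < Cardinal.lift.{1} lam := by
        refine lt_of_le_of_lt (Cardinal.mul_le_max _ _) ?_
        refine max_lt (max_lt hlt (Cardinal.lift_lt.2 hθlam)) ?_
        have : Cardinal.lift.{1} Cardinal.aleph0 < Cardinal.lift.{1} lam :=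
          Cardinal.lift_lt.2 (hθ.trans_lt hθlam)
        simpa using this
      exact absurd (hP ▸ h3.trans_lt h4) (lt_irrefl _)
    · exact heq
  · -- end segments
    intro a ha
    obtain ⟨α₀, hα₀, hga⟩ := hunb a ha
    refine ⟨fun β hβ => hβ.2, ?_⟩
    refine hsupF _ (hend α₀ hα₀) _ ?_ (fun β hβ => hβ.1)
    intro β hβ
    exact ⟨hβ.2, hga.trans (hmono α₀ β hβ.1 hβ.2), hmaps β hβ.2⟩
  · -- coloring
    intro c hc
    classical
    set d : Set Ordinal.{0} → Ordinal.{0} :=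
      fun u => if (g '' u).Infinite then c (g '' u) else 0 with hd
    have himg : ∀ u, BddCtbl lam u → (g '' u).Infinite → BddCtbl lam (g '' u) := by
      rintro u ⟨hu1, hu2, hu3, hu4⟩ hinf
      refine ⟨?_, hu2.image g, hinf, ?_⟩
      · rintro β ⟨α, hα, rfl⟩
        exact hmaps α (hu1 hα)
      · have hne' : (g '' u).Nonempty := hu3.nonempty.image g
        have hgs : g (sSup u) < lam.ord := hmaps _ hu4
        refine lt_of_le_of_lt (csSup_le hne' ?_) hgs
        rintro β ⟨α, hα, rfl⟩
        exact hmono α (sSup u) (le_csSup ⟨lam.ord, fun γ hγ => (hu1 hγ).le⟩ hα) hu4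
    have hd_lt : ∀ u, BddCtbl lam u → d u < lam.ord := by
      intro u hu
      by_cases hinf : (g '' u).Infinite
      · simpa [hd, hinf] using hc _ (himg u hu hinf)
      · simpa [hd, hinf] using hord0
    obtain ⟨x, hxF, γ, hγ, havoid⟩ := hcolor d hd_lt
    refine ⟨g '' x, ⟨?_, ?_⟩, γ, hγ, ?_⟩
    · rintro β ⟨α, hα, rfl⟩
      exact hmaps α (hsub x hxF hα)
    · exact hsupF x hxF _ (fun α hα => ⟨hsub x hxF hα, Set.mem_image_of_mem g hα⟩)
        (fun α hα => hα.1)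
    · intro u hux hu
      obtain ⟨hu1, hu2, hu3, hu4⟩ := hu
      haveI : Countable ↥u := hu2.to_subtype
      haveI : Infinite ↥u := hu3.to_subtype
      have hch : ∀ β : u, ∃ α, α ∈ x ∧ g α = (β : Ordinal) := fun β => hux β.2
      choose φ hφx hφg using hch
      set v : Set Ordinal.{0} := Set.range φ with hv
      have hvsubx : v ⊆ x := by rintro α ⟨β, rfl⟩; exact hφx β
      have hφinj : Function.Injective φ := by
        intro a b hab
        have : (a : Ordinal) = b := by rw [← hφg a, ← hφg b, hab]
        exact Subtype.ext this
      have hvinf : v.Infinite := Set.infinite_range_of_injective hφinj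
      obtain ⟨α₀, hα₀, hga⟩ := hunb (Order.succ (sSup u)) (hordlim.succ_lt hu4)
      have hα₀gt : sSup u < g α₀ := Order.succ_le_iff.1 hga
      have hvbd : ∀ α ∈ v, α < α₀ := by
        rintro α ⟨β, rfl⟩
        by_contra hcon
        push_neg at hcon
        have hle2 : g α₀ ≤ g (φ β) := hmono _ _ hcon (hsub x hxF (hφx β))
        rw [hφg β] at hle2
        have hβle : (β : Ordinal) ≤ sSup u :=
          le_csSup ⟨lam.ord, fun γ' hγ' => (hu1 hγ').le⟩ β.2
        exact absurd (hle2.trans hβle) (not_le.2 hα₀gt)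
      have hvsup : sSup v < lam.ord := by
        refine lt_of_le_of_lt (csSup_le hvinf.nonempty fun α hα => (hvbd α hα).le) hα₀
      have hvbdd : BddCtbl lam v :=
        ⟨fun α hα => hsub x hxF (hvsubx hα), Set.countable_range φ, hvinf, hvsup⟩
      have hgv : g '' v = u := by
        ext β
        constructor
        · rintro ⟨α, ⟨β', rfl⟩, rfl⟩
          rw [hφg]
          exact β'.2
        · intro hβ
          exact ⟨φ ⟨β, hβ⟩, Set.mem_range_self _, hφg _⟩
      have hdv : d v = c u := by
        simp only [hd]
        rw [hgv, if_pos hu3]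
      exact hdv ▸ havoid v (fun α hα => hvsubx hα) hvbdd
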